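/- Let C be a monoidal category with unit object 𝟙, let M be an object equipped with morphisms ε : M ⊗ M → 𝟙 and η : 𝟙 → M ⊗ M satisfying both triangle (zig-zag) identities (i.e. (M, M) is an exact pairing exhibiting M as self-dual), and let M′ be an object equipped with a morphism ε′ : M′ ⊗ M′ → 𝟙. Let f : M → M′ be a morphism for which there exists an isomorphism u : 𝟙 → 𝟙 with ε′ ∘ (f ⊗ f) = u ∘ ε. Define the transpose f^∨ : M′ → M as the composite M′ ≅ 𝟙 ⊗ M′ → (M ⊗ M) ⊗ M′ ≅ M ⊗ (M ⊗ M′) → M ⊗ (M′ ⊗ M′) → M ⊗ 𝟙 ≅ M built from η ⊗ id_{M′}, id_M ⊗ (f ⊗ id_{M′}) and id_M ⊗ ε′. Then f^∨ ∘ f equals ρ_M ∘ (id_M ⊗ u) ∘ ρ_M^{-1}; in particular f^∨ ∘ f is an isomorphism and M is a retract of M′. -/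

import Mathlib

open CategoryTheory MonoidalCategory

/-- If `(ε, η)` is an exact self-pairing on `M` (both triangle identities hold),
`ε'` is a pairing on `M'`, and `f : M ⟶ M'` satisfies `ε' ∘ (f ⊗ f) = u ∘ ε` for some
isomorphism `u : 𝟙 ≅ 𝟙`, then the transpose `f^∨ : M' ⟶ M` satisfies
`f^∨ ∘ f = ρ_M ∘ (id_M ⊗ u) ∘ ρ_M⁻¹`; in particular `f^∨ ∘ f` is an isomorphism and
`M` is a retract of `M'`. -/
theorem transpose_comp_self_eq_unit_iso
    {C : Type*} [Category C] [MonoidalCategory C] (M M' : C)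
    (ε : M ⊗ M ⟶ 𝟙_ C) (η : 𝟙_ C ⟶ M ⊗ M)
    (triangle₁ : (λ_ M).inv ≫ (η ▷ M) ≫ (α_ M M M).hom ≫ (M ◁ ε) ≫ (ρ_ M).hom = 𝟙 M)
    (triangle₂ : (ρ_ M).inv ≫ (M ◁ η) ≫ (α_ M M M).inv ≫ (ε ▷ M) ≫ (λ_ M).hom = 𝟙 M)
    (ε' : M' ⊗ M' ⟶ 𝟙_ C) (f : M ⟶ M') (u : 𝟙_ C ≅ 𝟙_ C)
    (hf : (f ⊗ₘ f) ≫ ε' = ε ≫ u.hom) :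
    f ≫ ((λ_ M').inv ≫ (η ▷ M') ≫ (α_ M M M').hom ≫ (M ◁ (f ▷ M')) ≫ (M ◁ ε') ≫ (ρ_ M).hom)
        = (ρ_ M).inv ≫ (M ◁ u.hom) ≫ (ρ_ M).hom ∧
    IsIso (f ≫ ((λ_ M').inv ≫ (η ▷ M') ≫ (α_ M M M').hom ≫ (M ◁ (f ▷ M')) ≫ (M ◁ ε') ≫
        (ρ_ M).hom)) ∧
    ∃ r : M' ⟶ M, f ≫ r = 𝟙 M := by
  have key : f ≫ ((λ_ M').inv ≫ (η ▷ M') ≫ (α_ M M M').hom ≫ (M ◁ (f ▷ M')) ≫ (M ◁ ε') ≫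
      (ρ_ M).hom) = (ρ_ M).inv ≫ (M ◁ u.hom) ≫ (ρ_ M).hom := by
    have h1 : (λ_ M).inv ≫ (η ▷ M) ≫ (α_ M M M).hom ≫ (M ◁ ε) = (ρ_ M).inv := by
      rw [← cancel_mono (ρ_ M).hom]
      simpa using triangle₁
    rw [leftUnitor_inv_naturality_assoc, whisker_exchange_assoc,
      associator_naturality_right_assoc, ← MonoidalCategory.whiskerLeft_comp_assoc,
      ← MonoidalCategory.whiskerLeft_comp_assoc, ← tensorHom_def', hf,
      MonoidalCategory.whiskerLeft_comp, Category.assoc, reassoc_of% h1]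
  refine ⟨key, ?_, ?_⟩
  · rw [key]; infer_instance
  · refine ⟨((λ_ M').inv ≫ (η ▷ M') ≫ (α_ M M M').hom ≫ (M ◁ (f ▷ M')) ≫ (M ◁ ε') ≫
      (ρ_ M).hom) ≫ ((ρ_ M).inv ≫ (M ◁ u.inv) ≫ (ρ_ M).hom), ?_⟩
    rw [← Category.assoc, key]
    simp [← MonoidalCategory.whiskerLeft_comp_assoc]
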